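/- Fix an integer k ≥ 1. On the curve w^{k+1} = z^k(z² − 1), setting η₃ = w dz/(z²−1)³, one has η₃ = ((k+1)/(4k)) d(zw/(z²−1)) − (1/(4k)) · w dz/(z²−1) − ((k+1)/(2(2k+1))) d(zw/(z²−1)²). -/
import Mathlib
set_option maxHeartbeats 1000000


theorem stmt_8 (k : ℕ) (hk : 1 ≤ k)
    (z : ℂ) (hz0 : z ≠ 0) (hz1 : z ≠ 1) (hzm1 : z ≠ -1)
    (w : ℂ → ℂ)
    (hw : w z ^ (k+1) = z^k * (z^2 - 1))
    (hw' : HasDerivAt w (w z / (k+1) * ((k:ℂ)/z + 2*z/(z^2 - 1))) z)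
    (d₁ d₂ : ℂ)
    (hd₁ : HasDerivAt (fun s => s * w s / (s^2 - 1)) d₁ z)
    (hd₂ : HasDerivAt (fun s => s * w s / (s^2 - 1)^2) d₂ z) :
    w z / (z^2 - 1)^3
      = (((k:ℂ)+1)/(4*(k:ℂ))) * d₁
        - (1/(4*(k:ℂ))) * (w z / (z^2 - 1))
        - (((k:ℂ)+1)/(2*(2*(k:ℂ)+1))) * d₂ := by
  have hden : z^2 - 1 ≠ 0 := by
    intro h
    have h2 : (z-1)*(z+1) = 0 := by linear_combination h
    rcases mul_eq_zero.1 h2 with h' | h'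
    · exact hz1 (sub_eq_zero.1 h')
    · exact hzm1 (eq_neg_of_add_eq_zero_left h')
  have hk0 : (k:ℂ) ≠ 0 := Nat.cast_ne_zero.2 (by omega)
  have hk1 : (k:ℂ) + 1 ≠ 0 := by
    have : ((k+1 : ℕ) : ℂ) ≠ 0 := Nat.cast_ne_zero.2 (by omega)
    push_cast at this; exact this
  have h2k1 : 2*(k:ℂ) + 1 ≠ 0 := by
    have : ((2*k+1 : ℕ) : ℂ) ≠ 0 := Nat.cast_ne_zero.2 (by omega)
    push_cast at this; exact this
  set W := w z with hW
  set W' := w z / (k+1) * ((k:ℂ)/z + 2*z/(z^2 - 1)) with hW'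
  have hnum : HasDerivAt (fun s => s * w s) (1 * W + z * W') z :=
    (hasDerivAt_id z).mul hw'
  have hden' : HasDerivAt (fun s : ℂ => s^2 - 1) (2 * z^1) z := by
    simpa using (hasDerivAt_pow 2 z).sub_const 1
  have hD1 : HasDerivAt (fun s => s * w s / (s^2 - 1))
      (((1 * W + z * W') * (z^2-1) - z * W * (2*z^1)) / (z^2-1)^2) z :=
    hnum.div hden' hden
  have hD2 : HasDerivAt (fun s => s * w s / (s^2 - 1)^2)
      (((1 * W + z * W') * (z^2-1)^2 - z * W * ((2:ℕ) * (z^2-1)^1 * (2*z^1))) / ((z^2-1)^2)^2) z :=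
    hnum.div (hden'.pow 2) (pow_ne_zero 2 hden)
  have e1 : d₁ = ((1 * W + z * W') * (z^2-1) - z * W * (2*z^1)) / (z^2-1)^2 :=
    hd₁.unique hD1
  have e2 : d₂ = ((1 * W + z * W') * (z^2-1)^2 - z * W * ((2:ℕ) * (z^2-1)^1 * (2*z^1))) / ((z^2-1)^2)^2 :=
    hd₂.unique hD2
  have e1' : d₁ = W * (z^2 - (2*(k:ℂ)+1)) / (((k:ℂ)+1)*(z^2-1)^2) := by
    rw [e1, hW']
    rw [div_eq_div_iff (pow_ne_zero 2 hden) (mul_ne_zero hk1 (pow_ne_zero 2 hden))]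
    field_simp
    ring
  have e2' : d₂ = -(2*(k:ℂ)+1) * W * (z^2 + 1) / (((k:ℂ)+1)*(z^2-1)^3) := by
    rw [e2, hW']
    rw [div_eq_div_iff (pow_ne_zero 2 (pow_ne_zero 2 hden)) (mul_ne_zero hk1 (pow_ne_zero 3 hden))]
    push_cast
    field_simp
    ring
  have h4k : (4:ℂ)*(k:ℂ) ≠ 0 := mul_ne_zero (by norm_num) hk0
  have hD : (z^2-1)^3 ≠ 0 := pow_ne_zero 3 hden
  have hD4 : 4*(k:ℂ)*(z^2-1)^3 ≠ 0 := mul_ne_zero h4k hD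
  have t1 : (((k:ℂ)+1)/(4*(k:ℂ))) * (W * (z^2 - (2*(k:ℂ)+1)) / (((k:ℂ)+1)*(z^2-1)^2))
      = (W*(z^2-(2*(k:ℂ)+1))*(z^2-1)) / (4*(k:ℂ)*(z^2-1)^3) := by
    rw [div_mul_div_comm, div_eq_div_iff (mul_ne_zero h4k (mul_ne_zero hk1 (pow_ne_zero 2 hden))) hD4]
    ring
  have t2 : (1/(4*(k:ℂ))) * (W / (z^2 - 1))
      = (W*(z^2-1)^2) / (4*(k:ℂ)*(z^2-1)^3) := by
    rw [div_mul_div_comm, div_eq_div_iff (mul_ne_zero h4k hden) hD4]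
    ring
  have t3 : (((k:ℂ)+1)/(2*(2*(k:ℂ)+1))) * (-(2*(k:ℂ)+1) * W * (z^2 + 1) / (((k:ℂ)+1)*(z^2-1)^3))
      = (-(2*(k:ℂ)*W*(z^2+1))) / (4*(k:ℂ)*(z^2-1)^3) := by
    rw [div_mul_div_comm, div_eq_div_iff (mul_ne_zero (mul_ne_zero two_ne_zero h2k1) (mul_ne_zero hk1 hD)) hD4]
    ring
  rw [e1', e2', t1, t2, t3, div_sub_div_same, div_sub_div_same, div_eq_div_iff hD hD4]
  ring
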